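/- For every d ≥ 3, the Klein-type polynomial F = x y^{d-1} + y z^{d-1} + z x^{d-1} ∈ ℂ[x,y,z] is irreducible in ℂ[x,y,z] and smooth: the only common zero (x,y,z) ∈ ℂ³ of ∂F/∂x, ∂F/∂y, ∂F/∂z is (0,0,0). -/

import Mathlib

open MvPolynomial

private noncomputable def kleinFpoly (k : ℕ) : Polynomial (MvPolynomial (Fin 2) ℂ) :=
  Polynomial.C (X 1) * Polynomial.X ^ (k+2) +
    (Polynomial.C (X 0 ^ (k+2)) * Polynomial.X + Polynomial.C (X 0 * X 1 ^ (k+2)))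

private lemma klein_hf_eq (k : ℕ) :
    finSuccEquiv ℂ 2 ((X 0 * X 1 ^ (k+2) + X 1 * X 2 ^ (k+2) + X 2 * X 0 ^ (k+2) :
      MvPolynomial (Fin 3) ℂ)) = kleinFpoly k := by
  have h1 : (X (1:Fin 3) : MvPolynomial (Fin 3) ℂ) = X (Fin.succ 0) := rfl
  have h2 : (X (2:Fin 3) : MvPolynomial (Fin 3) ℂ) = X (Fin.succ 1) := rfl
  rw [h1, h2]
  simp only [map_add, map_mul, map_pow, finSuccEquiv_X_zero, finSuccEquiv_X_succ, kleinFpoly,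
    Polynomial.C_pow, Polynomial.C_mul]
  ring

private lemma klein_coeff_fpoly (k n : ℕ) :
    (kleinFpoly k).coeff n =
      (if n = k+2 then (X 1 : MvPolynomial (Fin 2) ℂ) else 0) +
      ((if n = 1 then (X 0:MvPolynomial (Fin 2) ℂ)^(k+2) else 0) +
       (if n = 0 then X 0 * (X 1:MvPolynomial (Fin 2) ℂ)^(k+2) else 0)) := by
  simp only [kleinFpoly, Polynomial.coeff_add, Polynomial.coeff_C_mul, Polynomial.coeff_X_pow,
    Polynomial.coeff_X, Polynomial.coeff_C, mul_ite, mul_one, mul_zero]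
  congr 2 <;> simp [eq_comm]

private lemma klein_degree_fpoly (k : ℕ) : (kleinFpoly k).degree = (k : WithBot ℕ) + 2 := by
  have hlt : (Polynomial.C ((X 0:MvPolynomial (Fin 2) ℂ)^(k+2)) * Polynomial.X +
      Polynomial.C (X 0 * X 1 ^ (k+2))).degree <
      (Polynomial.C (X 1:MvPolynomial (Fin 2) ℂ) * Polynomial.X ^ (k+2)).degree := by
    rw [Polynomial.degree_C_mul_X_pow _ (X_ne_zero 1)]
    refine lt_of_le_of_lt Polynomial.degree_linear_le ?_
    exact_mod_cast (by omega : 1 < k + 2)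
  rw [kleinFpoly, Polynomial.degree_add_eq_left_of_degree_lt hlt,
    Polynomial.degree_C_mul_X_pow _ (X_ne_zero 1)]
  push_cast; ring

private lemma klein_prime_X_mv :
    ∀ (n : ℕ) (i : Fin (n+1)), Prime (X i : MvPolynomial (Fin (n+1)) ℂ)
  | 0, i => by
    have h0 : i = 0 := by omega
    rw [← MulEquiv.prime_iff (finSuccEquiv ℂ 0).toMulEquiv]
    show Prime (finSuccEquiv ℂ 0 (X i))
    rw [h0, finSuccEquiv_X_zero]
    exact Polynomial.prime_X
  | (n+1), i => by
    rw [← MulEquiv.prime_iff (finSuccEquiv ℂ (n+1)).toMulEquiv]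
    show Prime (finSuccEquiv ℂ (n+1) (X i))
    rcases Fin.eq_zero_or_eq_succ i with rfl | ⟨j, rfl⟩
    · rw [finSuccEquiv_X_zero]; exact Polynomial.prime_X
    · rw [finSuccEquiv_X_succ, Polynomial.prime_C_iff]
      exact klein_prime_X_mv n j

private lemma klein_not_dvd_X01 : ¬ (X 0 : MvPolynomial (Fin 2) ℂ) ∣ X 1 := by
  rintro ⟨c, hc⟩
  have := congrArg ((MvPolynomial.eval) (fun j : Fin 2 => if j = 0 then 0 else 1)) hc
  simp at this

private lemma klein_not_dvd_X10 : ¬ (X 1 : MvPolynomial (Fin 2) ℂ) ∣ X 0 := by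
  rintro ⟨c, hc⟩
  have := congrArg ((MvPolynomial.eval) (fun j : Fin 2 => if j = 0 then 1 else 0)) hc
  simp at this

private lemma klein_irr_fpoly (k : ℕ) : Irreducible (kleinFpoly k) := by
  have hY : Prime (X 0 : MvPolynomial (Fin 2) ℂ) := klein_prime_X_mv 1 0
  have hZ : Prime (X 1 : MvPolynomial (Fin 2) ℂ) := klein_prime_X_mv 1 1
  have hdeg := klein_degree_fpoly k
  have hnatdeg : (kleinFpoly k).natDegree = k + 2 := by
    apply Polynomial.natDegree_eq_of_degree_eq_some; rw [hdeg]; push_cast; ring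
  refine Polynomial.irreducible_of_eisenstein_criterion
    ((Ideal.span_singleton_prime hY.ne_zero).2 hY) ?_ ?_ ?_ ?_ ?_
  · rw [Polynomial.leadingCoeff, hnatdeg, klein_coeff_fpoly,
      if_pos rfl, if_neg (by omega : ¬ (k+2 = 1)), if_neg (by omega : ¬ (k+2 = 0)),
      Ideal.mem_span_singleton]
    simpa using klein_not_dvd_X01
  · intro n hn
    rw [hdeg] at hn
    have hn' : n < k + 2 := by exact_mod_cast hn
    rw [klein_coeff_fpoly, if_neg (by omega : ¬ (n = k+2)), Ideal.mem_span_singleton]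
    rcases Nat.eq_or_lt_of_le (Nat.zero_le n) with h0 | h0
    · rw [if_neg (by omega), if_pos (by omega)]
      simpa using dvd_mul_right (X 0 : MvPolynomial (Fin 2) ℂ) (X 1 ^ (k+2))
    · by_cases h1 : n = 1
      · rw [if_pos h1, if_neg (by omega)]
        simpa using dvd_pow_self (X 0 : MvPolynomial (Fin 2) ℂ) (by omega : k+2 ≠ 0)
      · rw [if_neg h1, if_neg (by omega)]
        simp
  · rw [hdeg]
    exact_mod_cast (by omega : 0 < k + 2)
  · rw [klein_coeff_fpoly, if_neg (by omega : ¬ (0 = k+2)), if_neg (by omega : ¬ (0 = 1)),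
      if_pos rfl, Ideal.span_singleton_pow, Ideal.mem_span_singleton]
    rintro ⟨c, hc⟩
    apply klein_not_dvd_X01
    refine hY.dvd_of_dvd_pow (n := k+2) ⟨c, ?_⟩
    have : (X 0 : MvPolynomial (Fin 2) ℂ) * (X 1 ^ (k+2)) = X 0 * (X 0 * c) := by
      linear_combination hc
    exact mul_left_cancel₀ hY.ne_zero this
  · intro r hr
    have hco := (Polynomial.C_dvd_iff_dvd_coeff r _).1 hr
    have hrZ := hco (k+2); have hrY := hco 1
    rw [klein_coeff_fpoly, if_pos rfl, if_neg (by omega : ¬ (k+2 = 1)),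
      if_neg (by omega : ¬ (k+2 = 0))] at hrZ
    rw [klein_coeff_fpoly, if_neg (by omega : ¬ (1 = k+2)), if_pos rfl,
      if_neg (by omega : ¬ (1 = 0))] at hrY
    simp only [add_zero, zero_add] at hrZ hrY
    obtain ⟨c, hc⟩ := hrZ
    rcases hZ.irreducible.isUnit_or_isUnit hc with h | h
    · exact h
    · exfalso
      obtain ⟨u, rfl⟩ := h
      have hZr : (X 1 : MvPolynomial (Fin 2) ℂ) ∣ r :=
        ⟨(↑u⁻¹ : MvPolynomial (Fin 2) ℂ), by rw [hc, mul_assoc, Units.mul_inv, mul_one]⟩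
      exact klein_not_dvd_X10 (hZ.dvd_of_dvd_pow (hZr.trans hrY))

/-- For every `d ≥ 3` the Klein-type polynomial
`x y^(d-1) + y z^(d-1) + z x^(d-1)` is irreducible in `ℂ[x,y,z]` and smooth. -/
theorem klein_type_irreducible_smooth (d : ℕ) (hd : 3 ≤ d) :
    Irreducible
      ((X 0 * X 1 ^ (d - 1) + X 1 * X 2 ^ (d - 1) + X 2 * X 0 ^ (d - 1) :
        MvPolynomial (Fin 3) ℂ)) ∧
    ∀ v : Fin 3 → ℂ,
      (∀ i, eval v (pderiv i
          (X 0 * X 1 ^ (d - 1) + X 1 * X 2 ^ (d - 1) + X 2 * X 0 ^ (d - 1) :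
            MvPolynomial (Fin 3) ℂ)) = 0) →
      v = 0 := by
  obtain ⟨k, rfl⟩ : ∃ k, d = k + 3 := ⟨d - 3, by omega⟩
  have he : k + 3 - 1 = k + 2 := rfl
  simp only [he]
  constructor
  · have h := klein_irr_fpoly k
    rw [← klein_hf_eq k] at h
    exact (MulEquiv.irreducible_iff ((finSuccEquiv ℂ 2).toMulEquiv)).1 h
  · intro v hv
    have h0 := hv 0; have h1 := hv 1; have h2 := hv 2
    simp only [map_add, pderiv_mul, pderiv_pow, pderiv_X_self,
      pderiv_X_of_ne (show (1:Fin 3) ≠ 0 by decide), pderiv_X_of_ne (show (2:Fin 3) ≠ 0 by decide),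
      pderiv_X_of_ne (show (0:Fin 3) ≠ 1 by decide), pderiv_X_of_ne (show (2:Fin 3) ≠ 1 by decide),
      pderiv_X_of_ne (show (0:Fin 3) ≠ 2 by decide), pderiv_X_of_ne (show (1:Fin 3) ≠ 2 by decide),
      mul_zero, zero_mul, add_zero, zero_add, mul_one, one_mul, Nat.add_sub_cancel,
      eval_add, eval_mul, eval_pow, eval_X, map_natCast] at h0 h1 h2
    push_cast at h0 h1 h2
    have key : v 0 = 0 ∧ v 1 = 0 ∧ v 2 = 0 := by
      by_cases ha : v 0 = 0
      · have hb : v 1 = 0 := by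
          have hp : v 1 ^ (k+2) = 0 := by
            linear_combination h0 - v 2 * ((k:ℂ)+2) * v 0 ^ k * ha
          exact (pow_eq_zero_iff (by omega : k+2 ≠ 0)).1 hp
        have hc : v 2 = 0 := by
          have hp : v 2 ^ (k+2) = 0 := by
            linear_combination h1 - ((k:ℂ)+2) * v 1 ^ (k+1) * ha
          exact (pow_eq_zero_iff (by omega : k+2 ≠ 0)).1 hp
        exact ⟨ha, hb, hc⟩
      · exfalso
        by_cases hb : v 1 = 0
        · apply ha
          have hp : v 0 ^ (k+2) = 0 := by
            linear_combination h2 - ((k:ℂ)+2) * v 2 ^ (k+1) * hb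
          exact (pow_eq_zero_iff (by omega : k+2 ≠ 0)).1 hp
        by_cases hc : v 2 = 0
        · apply hb
          have hp : v 1 ^ (k+2) = 0 := by
            linear_combination h0 - ((k:ℂ)+2) * v 0 ^ (k+1) * hc
          exact (pow_eq_zero_iff (by omega : k+2 ≠ 0)).1 hp
        · have m0 : v 1 ^ (k+2) = -((k:ℂ)+2) * v 2 * v 0 ^ (k+1) := by linear_combination h0
          have m1 : v 2 ^ (k+2) = -((k:ℂ)+2) * v 0 * v 1 ^ (k+1) := by linear_combination h1
          have m2 : v 0 ^ (k+2) = -((k:ℂ)+2) * v 1 * v 2 ^ (k+1) := by linear_combination h2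
          have hprod : (1 + ((k:ℂ)+2)^3) * (v 0 * v 1 * v 2) ^ (k+2) = 0 := by
            linear_combination (v 2 ^ (k+2) * v 0 ^ (k+2)) * m0
              + ((-((k:ℂ)+2) * v 2 * v 0 ^ (k+1)) * v 0 ^ (k+2)) * m1
              + ((-((k:ℂ)+2) * v 2 * v 0 ^ (k+1)) * (-((k:ℂ)+2) * v 0 * v 1 ^ (k+1))) * m2
          have habc : (v 0 * v 1 * v 2) ^ (k+2) ≠ 0 :=
            pow_ne_zero _ (mul_ne_zero (mul_ne_zero ha hb) hc)
          have hE : 1 + ((k:ℂ)+2)^3 = 0 := by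
            rcases mul_eq_zero.1 hprod with h | h
            · exact h
            · exact absurd h habc
          have hnat : ((1 + (k+2)^3 : ℕ) : ℂ) = 0 := by push_cast; linear_combination hE
          have := Nat.cast_eq_zero.1 hnat
          omega
    obtain ⟨ha, hb, hc⟩ := key
    funext i
    fin_cases i
    · simpa using ha
    · simpa using hb
    · simpa using hc
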